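/- Let A be an n×n symmetric matrix over F₂ of rank k. Then either (i) there exists an n×k matrix X over F₂ of rank k with A = X Xᵀ, or (ii) k is even and there exists an n×(k+1) matrix X over F₂ of rank k with A = X Xᵀ. -/

import Mathlib

open Matrix

/-- A subgraph complementation system for `G`: a finite collection (multiset) of subsets of
vertices such that two distinct vertices are adjacent iff they lie together in an odd
number of the sets. -/
def IsSCS {V : Type*} [DecidableEq V] (G : SimpleGraph V) (𝒞 : Multiset (Finset V)) : Prop :=
  ∀ u v : V, u ≠ v →
    (G.Adj u v ↔ Odd (Multiset.card (𝒞.filter (fun C => u ∈ C ∧ v ∈ C))))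

/-- The subgraph complementation number `c₂(G)`: the minimum cardinality of a subgraph
complementation system for `G`. -/
noncomputable def c2 {V : Type*} [DecidableEq V] (G : SimpleGraph V) : ℕ :=
  sInf {k | ∃ 𝒞 : Multiset (Finset V), IsSCS G 𝒞 ∧ Multiset.card 𝒞 = k}

/-- A symmetric matrix over `F₂` fits `G` if its off-diagonal entries record adjacency. -/
def FitsF2 {V : Type*} (G : SimpleGraph V) (A : Matrix V V (ZMod 2)) : Prop :=
  A.IsSymm ∧ ∀ u v : V, u ≠ v → (A u v = 1 ↔ G.Adj u v)

/-- The minimum rank of `G` over `F₂`: the minimum rank of a symmetric matrix over `F₂`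
that fits `G`. -/
noncomputable def mrF2 {V : Type*} [Fintype V] (G : SimpleGraph V) : ℕ :=
  sInf {k | ∃ A : Matrix V V (ZMod 2), FitsF2 G A ∧ A.rank = k}


open Module Submodule


section
variable {n : ℕ} {A : Matrix (Fin n) (Fin n) (ZMod 2)}

lemma zmod2_eq_one {x : ZMod 2} (h : x ≠ 0) : x = 1 := by
  fin_cases x
  · exact absurd rfl h
  · rfl

lemma vadd_self (v : Fin n → ZMod 2) : v + v = 0 := by
  ext m; exact CharTwo.add_self_eq_zero _

lemma veq_of_add_eq_zero {v w : Fin n → ZMod 2} (h : v + w = 0) : v = w := by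
  have h2 := eq_neg_of_add_eq_zero_left h
  rwa [show -w = w from by ext m; exact CharTwo.neg_eq _] at h2

lemma dot_symm (hA : Aᵀ = A)
    (u v : Fin n → ZMod 2) : (A *ᵥ u) ⬝ᵥ v = u ⬝ᵥ (A *ᵥ v) := by
  have h : ∀ i j, A i j = A j i := fun i j => by conv_lhs => rw [← hA]; rw [transpose_apply]
  simp only [dotProduct, mulVec, dotProduct, Finset.sum_mul, Finset.mul_sum]
  rw [Finset.sum_comm]
  exact Finset.sum_congr rfl fun i _ => Finset.sum_congr rfl fun j _ => by rw [h]; ring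

lemma vecMulVec_mulVec' {m : ℕ} (a : Fin n → ZMod 2) (b x : Fin m → ZMod 2) :
    (vecMulVec a b) *ᵥ x = (b ⬝ᵥ x) • a := by
  ext i
  simp only [mulVec, vecMulVec_apply, dotProduct, Pi.smul_apply, smul_eq_mul, Finset.sum_mul]
  exact Finset.sum_congr rfl fun j _ => by ring

lemma ker_dot (hA : Aᵀ = A) {x : Fin n → ZMod 2} (hx : A *ᵥ x = 0) (w : Fin n → ZMod 2) :
    (A *ᵥ w) ⬝ᵥ x = 0 := by rw [dot_symm hA, hx, dotProduct_zero]

lemma col_eq (i : Fin n) : A *ᵥ Pi.single i 1 = fun m => A m i := by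
  ext m; simp [mulVec_single]

lemma pivot1_ker (hA : Aᵀ = A) {i : Fin n} (hii : A i i = 1) :
    LinearMap.ker (A + vecMulVec (fun m => A m i) (fun m => A m i)).mulVecLin
      = LinearMap.ker A.mulVecLin ⊔ span (ZMod 2) {Pi.single i (1 : ZMod 2)} := by
  set a : Fin n → ZMod 2 := fun m => A m i with ha'
  set e : Fin n → ZMod 2 := Pi.single i 1 with he
  have ha : A *ᵥ e = a := col_eq i
  have hBmul : ∀ x, (A + vecMulVec a a) *ᵥ x = A *ᵥ x + (a ⬝ᵥ x) • a := by
    intro x; rw [add_mulVec, vecMulVec_mulVec']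
  have hdot : ∀ x, A *ᵥ x = 0 → a ⬝ᵥ x = 0 := by
    intro x hx; rw [← ha]; exact ker_dot hA hx _
  have hae : a ⬝ᵥ e = 1 := by
    rw [he]; simp only [dotProduct, Pi.single_apply, mul_ite, mul_one, mul_zero,
      Finset.sum_ite_eq', Finset.mem_univ, if_true]
    exact hii
  apply le_antisymm
  · intro x hx
    rw [LinearMap.mem_ker, mulVecLin_apply, hBmul] at hx
    have hAx : A *ᵥ x = (a ⬝ᵥ x) • a := veq_of_add_eq_zero hx
    have hy : A *ᵥ (x + (a ⬝ᵥ x) • e) = 0 := by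
      rw [mulVec_add, mulVec_smul, ha, hAx, vadd_self]
    have hx' : x = (x + (a ⬝ᵥ x) • e) + (a ⬝ᵥ x) • e := by
      rw [add_assoc, vadd_self, add_zero]
    rw [hx']
    exact add_mem_sup (by simpa [LinearMap.mem_ker, mulVecLin_apply] using hy)
      (smul_mem _ _ (mem_span_singleton_self _))
  · rw [sup_le_iff]
    constructor
    · intro x hx
      rw [LinearMap.mem_ker, mulVecLin_apply] at hx ⊢
      rw [hBmul, hx, hdot x hx, zero_add, zero_smul]
    · rw [span_le, Set.singleton_subset_iff]
      simp only [SetLike.mem_coe, LinearMap.mem_ker, mulVecLin_apply]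
      rw [hBmul, ha, hae, one_smul, vadd_self]
end

section
variable {n : ℕ} {A : Matrix (Fin n) (Fin n) (ZMod 2)}

lemma single_ne_zero' (i : Fin n) : (Pi.single i (1 : ZMod 2) : Fin n → ZMod 2) ≠ 0 := by
  intro h
  have := congrFun h i
  simp at this

lemma ker_inf_single (hA : Aᵀ = A) {i : Fin n} (hii : A i i = 1) :
    LinearMap.ker A.mulVecLin ⊓ span (ZMod 2) {Pi.single i (1 : ZMod 2)} = ⊥ := by
  rw [eq_bot_iff]
  intro x hx
  rw [Submodule.mem_inf] at hx
  obtain ⟨hx1, hx2⟩ := hx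
  rw [mem_span_singleton] at hx2
  obtain ⟨t, rfl⟩ := hx2
  rw [LinearMap.mem_ker, mulVecLin_apply, mulVec_smul, col_eq] at hx1
  have := congrFun hx1 i
  simp only [Pi.smul_apply, smul_eq_mul, Pi.zero_apply, hii, mul_one] at this
  simp [this]

lemma rank_nullity {m : ℕ} (M : Matrix (Fin n) (Fin m) (ZMod 2)) :
    M.rank + finrank (ZMod 2) (LinearMap.ker M.mulVecLin) = m := by
  rw [Matrix.rank, LinearMap.finrank_range_add_finrank_ker]
  simp

lemma pivot1_rank (hA : Aᵀ = A) {i : Fin n} (hii : A i i = 1) :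
    (A + vecMulVec (fun m => A m i) (fun m => A m i)).rank + 1 = A.rank := by
  have hker := pivot1_ker hA hii
  have h1 := rank_nullity (A + vecMulVec (fun m => A m i) (fun m => A m i))
  have h2 := rank_nullity A
  rw [hker] at h1
  have h3 := Submodule.finrank_sup_add_finrank_inf_eq
    (LinearMap.ker A.mulVecLin) (span (ZMod 2) {Pi.single i (1 : ZMod 2)})
  rw [ker_inf_single hA hii, finrank_bot, finrank_span_singleton (single_ne_zero' i)] at h3
  omega
end

section
variable {n : ℕ} {A : Matrix (Fin n) (Fin n) (ZMod 2)}

lemma vecMulVec_transpose' (a b : Fin n → ZMod 2) :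
    (vecMulVec a b)ᵀ = vecMulVec b a := by
  ext i j; simp [vecMulVec_apply]; ring

lemma pivot1'_ker (hA : Aᵀ = A) (hdiag : ∀ m, A m m = 0) {i j : Fin n} (hij : A i j = 1) :
    LinearMap.ker (A + vecMulVec (fun m => A m i + A m j) (fun m => A m i + A m j)).mulVecLin
      = LinearMap.ker A.mulVecLin := by
  set c : Fin n → ZMod 2 := fun m => A m i + A m j with hc'
  set w : Fin n → ZMod 2 := Pi.single i 1 + Pi.single j 1 with hw'
  have hw : A *ᵥ w = c := by
    rw [hw', mulVec_add, col_eq, col_eq]; ext m; simp [hc']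
  have hji : A j i = 1 := by rw [← hA]; exact hij
  have hcw : c ⬝ᵥ w = 0 := by
    rw [hw', dotProduct_add, dotProduct_single_one, dotProduct_single_one, hc']
    simp only [hdiag i, hdiag j, hij, hji, zero_add, add_zero]; decide
  have hBmul : ∀ x, (A + vecMulVec c c) *ᵥ x = A *ᵥ x + (c ⬝ᵥ x) • c := by
    intro x; rw [add_mulVec, vecMulVec_mulVec']
  apply le_antisymm
  · intro x hx
    rw [LinearMap.mem_ker, mulVecLin_apply, hBmul] at hx
    have hAx : A *ᵥ x = (c ⬝ᵥ x) • c := veq_of_add_eq_zero hx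
    have hcx : c ⬝ᵥ x = 0 := by
      have h1 : c ⬝ᵥ x = w ⬝ᵥ (A *ᵥ x) := by rw [← hw, dot_symm hA]
      rw [hAx] at h1
      have h2 : w ⬝ᵥ ((c ⬝ᵥ x) • c) = (c ⬝ᵥ x) * (w ⬝ᵥ c) := by
        rw [dotProduct_smul, smul_eq_mul]
      have h3 : w ⬝ᵥ c = 0 := by rw [dotProduct_comm]; exact hcw
      rw [h2, h3, mul_zero] at h1
      exact h1
    rw [LinearMap.mem_ker, mulVecLin_apply, hAx, hcx, zero_smul]
  · intro x hx
    rw [LinearMap.mem_ker, mulVecLin_apply] at hx ⊢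
    have hcx : c ⬝ᵥ x = 0 := by rw [← hw]; exact ker_dot hA hx _
    rw [hBmul, hx, hcx, zero_smul, add_zero]

lemma pivot1'_range (hA : Aᵀ = A) (hdiag : ∀ m, A m m = 0) {i j : Fin n} (hij : A i j = 1) :
    LinearMap.range (A + vecMulVec (fun m => A m i + A m j) (fun m => A m i + A m j)).mulVecLin
      = LinearMap.range A.mulVecLin := by
  set c : Fin n → ZMod 2 := fun m => A m i + A m j with hc'
  set w : Fin n → ZMod 2 := Pi.single i 1 + Pi.single j 1 with hw'
  have hw : A *ᵥ w = c := by
    rw [hw', mulVec_add, col_eq, col_eq]; ext m; simp [hc']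
  have hle : LinearMap.range (A + vecMulVec c c).mulVecLin ≤ LinearMap.range A.mulVecLin := by
    rintro _ ⟨x, rfl⟩
    refine ⟨x + (c ⬝ᵥ x) • w, ?_⟩
    rw [mulVecLin_apply, mulVecLin_apply, mulVec_add, mulVec_smul, hw, add_mulVec,
      vecMulVec_mulVec']
  apply Submodule.eq_of_le_of_finrank_le hle
  have h1 := rank_nullity (A + vecMulVec c c)
  have h2 := rank_nullity A
  rw [pivot1'_ker hA hdiag hij] at h1
  have : (A + vecMulVec c c).rank = A.rank := by omega
  rw [Matrix.rank, Matrix.rank] at this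
  omega
end

section
variable {n : ℕ} {A : Matrix (Fin n) (Fin n) (ZMod 2)}

lemma pivot2_ker (hA : Aᵀ = A) (hdiag : ∀ m, A m m = 0) {i j : Fin n} (hij : A i j = 1) :
    LinearMap.ker (A + vecMulVec (fun m => A m i) (fun m => A m j)
        + vecMulVec (fun m => A m j) (fun m => A m i)).mulVecLin
      = LinearMap.ker A.mulVecLin
        ⊔ span (ZMod 2) {Pi.single i (1 : ZMod 2), Pi.single j (1 : ZMod 2)} := by
  set a : Fin n → ZMod 2 := fun m => A m i with ha'
  set b : Fin n → ZMod 2 := fun m => A m j with hb'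
  have hji : A j i = 1 := by rw [← hA]; exact hij
  have ha : A *ᵥ Pi.single i 1 = a := col_eq i
  have hb : A *ᵥ Pi.single j 1 = b := col_eq j
  have hBmul : ∀ x, (A + vecMulVec a b + vecMulVec b a) *ᵥ x
      = A *ᵥ x + ((b ⬝ᵥ x) • a + (a ⬝ᵥ x) • b) := by
    intro x
    rw [add_mulVec, add_mulVec, vecMulVec_mulVec', vecMulVec_mulVec', add_assoc]
  apply le_antisymm
  · intro x hx
    rw [LinearMap.mem_ker, mulVecLin_apply, hBmul] at hx
    have hAx : A *ᵥ x = (b ⬝ᵥ x) • a + (a ⬝ᵥ x) • b := veq_of_add_eq_zero hx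
    set z : Fin n → ZMod 2 := (b ⬝ᵥ x) • (Pi.single i 1 : Fin n → ZMod 2)
      + (a ⬝ᵥ x) • (Pi.single j 1 : Fin n → ZMod 2) with hz'
    have hAz : A *ᵥ z = (b ⬝ᵥ x) • a + (a ⬝ᵥ x) • b := by
      rw [hz', mulVec_add, mulVec_smul, mulVec_smul, ha, hb]
    have hy : A *ᵥ (x + z) = 0 := by
      rw [mulVec_add, hAx, hAz, vadd_self]
    have hx' : x = (x + z) + z := by rw [add_assoc, vadd_self, add_zero]
    rw [hx']
    refine add_mem_sup (by simpa [LinearMap.mem_ker, mulVecLin_apply] using hy) ?_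
    exact mem_span_pair.mpr ⟨b ⬝ᵥ x, a ⬝ᵥ x, hz'.symm⟩
  · rw [sup_le_iff]
    constructor
    · intro x hx
      rw [LinearMap.mem_ker, mulVecLin_apply] at hx ⊢
      have hax : a ⬝ᵥ x = 0 := by rw [← ha]; exact ker_dot hA hx _
      have hbx : b ⬝ᵥ x = 0 := by rw [← hb]; exact ker_dot hA hx _
      rw [hBmul, hx, hax, hbx, zero_smul, zero_smul, add_zero, add_zero]
    · rw [span_le]
      rintro x (rfl | rfl)
      · simp only [SetLike.mem_coe, LinearMap.mem_ker, mulVecLin_apply]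
        rw [hBmul, ha, dotProduct_single_one, dotProduct_single_one]
        have h1 : b i = 1 := by rw [hb']; exact hij
        have h2 : a i = 0 := by rw [ha']; exact hdiag i
        rw [h1, h2, one_smul, zero_smul, add_zero, vadd_self]
      · simp only [SetLike.mem_coe, LinearMap.mem_ker, mulVecLin_apply]
        rw [hBmul, hb, dotProduct_single_one, dotProduct_single_one]
        have h1 : b j = 0 := by rw [hb']; exact hdiag j
        have h2 : a j = 1 := by rw [ha']; exact hji
        rw [h1, h2, one_smul, zero_smul, zero_add, vadd_self]

lemma span_pair_finrank {i j : Fin n} (hne : i ≠ j) :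
    finrank (ZMod 2) (span (ZMod 2) {Pi.single i (1 : ZMod 2), Pi.single j (1 : ZMod 2)}
      : Submodule (ZMod 2) (Fin n → ZMod 2)) = 2 := by
  rw [show ({Pi.single i (1 : ZMod 2), Pi.single j (1 : ZMod 2)} : Set (Fin n → ZMod 2))
      = insert (Pi.single i (1 : ZMod 2)) {Pi.single j (1 : ZMod 2)} from rfl,
    Submodule.span_insert]
  have hinf : (span (ZMod 2) {Pi.single i (1 : ZMod 2)} : Submodule (ZMod 2) (Fin n → ZMod 2))
      ⊓ span (ZMod 2) {Pi.single j (1 : ZMod 2)} = ⊥ := by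
    rw [eq_bot_iff]
    intro x hx
    rw [Submodule.mem_inf, mem_span_singleton, mem_span_singleton] at hx
    obtain ⟨⟨s, hs⟩, ⟨t, ht⟩⟩ := hx
    have h5 := congrFun (hs.trans ht.symm) i
    rw [Pi.smul_apply, Pi.smul_apply, Pi.single_eq_same, Pi.single_eq_of_ne hne,
      smul_eq_mul, smul_eq_mul, mul_one, mul_zero] at h5
    rw [Submodule.mem_bot, ← hs, h5, zero_smul]
  have h3 := Submodule.finrank_sup_add_finrank_inf_eq
    (span (ZMod 2) {Pi.single i (1 : ZMod 2)} : Submodule (ZMod 2) (Fin n → ZMod 2))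
    (span (ZMod 2) {Pi.single j (1 : ZMod 2)})
  rw [hinf, finrank_bot, finrank_span_singleton (single_ne_zero' i),
    finrank_span_singleton (single_ne_zero' j)] at h3
  omega

lemma parity_even : ∀ k : ℕ, ∀ {n : ℕ} (A : Matrix (Fin n) (Fin n) (ZMod 2)), Aᵀ = A →
    (∀ m, A m m = 0) → A.rank = k → Even k := by
  intro k
  induction k using Nat.strong_induction_on with
  | _ k IH =>
    intro n A hA hdiag hrank
    by_cases h0 : A = 0
    · subst h0
      rw [Matrix.rank_zero] at hrank
      exact hrank ▸ Even.zero
    · have hent : ∃ i j, A i j = 1 := by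
        by_contra hc
        push_neg at hc
        apply h0
        ext i j
        by_contra hne
        exact hc i j (zmod2_eq_one hne)
      obtain ⟨i, j, hij⟩ := hent
      have hne : i ≠ j := fun h => by rw [h, hdiag j] at hij; exact one_ne_zero hij.symm
      have hkB := pivot2_ker hA hdiag hij
      set B : Matrix (Fin n) (Fin n) (ZMod 2) := A + vecMulVec (fun m => A m i) (fun m => A m j)
        + vecMulVec (fun m => A m j) (fun m => A m i) with hB'
      have hBsym : Bᵀ = B := by
        rw [hB', transpose_add, transpose_add, hA, vecMulVec_transpose', vecMulVec_transpose']
        rw [add_assoc, add_assoc]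
        congr 1
        rw [add_comm]
      have hBdiag : ∀ m, B m m = 0 := by
        intro m
        rw [hB']
        simp only [Matrix.add_apply, vecMulVec_apply, hdiag m, zero_add]
        rw [mul_comm (A m j) (A m i)]
        exact CharTwo.add_self_eq_zero _
      have h1 := rank_nullity B
      have h2 := rank_nullity A
      rw [hkB] at h1
      have hinf : LinearMap.ker A.mulVecLin
          ⊓ span (ZMod 2) {Pi.single i (1 : ZMod 2), Pi.single j (1 : ZMod 2)} = ⊥ := by
        rw [eq_bot_iff]
        intro x hx
        rw [Submodule.mem_inf] at hx
        obtain ⟨hx1, hx2⟩ := hx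
        rw [mem_span_pair] at hx2
        obtain ⟨s, t, hst⟩ := hx2
        rw [LinearMap.mem_ker, mulVecLin_apply, ← hst, mulVec_add, mulVec_smul, mulVec_smul,
          col_eq, col_eq] at hx1
        have hji : A j i = 1 := by rw [← hA]; exact hij
        have hcj := congrFun hx1 j
        simp only [Pi.add_apply, Pi.smul_apply, smul_eq_mul, Pi.zero_apply, hji, hdiag j,
          mul_one, mul_zero, add_zero] at hcj
        have hci := congrFun hx1 i
        simp only [Pi.add_apply, Pi.smul_apply, smul_eq_mul, Pi.zero_apply, hij, hdiag i,
          mul_one, mul_zero, zero_add] at hci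
        rw [Submodule.mem_bot, ← hst, hcj, hci, zero_smul, zero_smul, add_zero]
      have h3 := Submodule.finrank_sup_add_finrank_inf_eq
        (LinearMap.ker A.mulVecLin)
        (span (ZMod 2) {Pi.single i (1 : ZMod 2), Pi.single j (1 : ZMod 2)})
      rw [hinf, finrank_bot, span_pair_finrank hne] at h3
      have hBrank : B.rank + 2 = k := by omega
      have hBev := IH B.rank (by omega) B hBsym hBdiag rfl
      rw [← hBrank]
      exact hBev.add even_two
end

section
variable {n : ℕ}

lemma finrank_sup_span_singleton {S : Submodule (ZMod 2) (Fin n → ZMod 2)}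
    {v : Fin n → ZMod 2} (hv : v ∉ S) :
    finrank (ZMod 2) ((S ⊔ span (ZMod 2) {v} : Submodule (ZMod 2) (Fin n → ZMod 2)))
      = finrank (ZMod 2) S + 1 := by
  have hv0 : v ≠ 0 := fun h => hv (h ▸ S.zero_mem)
  have hinf : S ⊓ span (ZMod 2) {v} = ⊥ := by
    rw [eq_bot_iff]
    intro x hx
    rw [Submodule.mem_inf] at hx
    obtain ⟨hx1, hx2⟩ := hx
    rw [mem_span_singleton] at hx2
    obtain ⟨t, rfl⟩ := hx2
    rw [Submodule.mem_bot]
    by_cases ht : t = 0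
    · rw [ht, zero_smul]
    · rw [zmod2_eq_one ht, one_smul] at hx1 ⊢
      exact absurd hx1 hv
  have h3 := Submodule.finrank_sup_add_finrank_inf_eq S (span (ZMod 2) {v})
  rw [hinf, finrank_bot, finrank_span_singleton hv0] at h3
  omega

variable {m : ℕ} (X : Matrix (Fin n) (Fin m) (ZMod 2)) (c : Fin n → ZMod 2)

lemma snoc_mul_transpose :
    (Matrix.of fun i => Fin.snoc (X i) (c i) : Matrix (Fin n) (Fin (m + 1)) (ZMod 2))
      * (Matrix.of fun i => Fin.snoc (X i) (c i) : Matrix (Fin n) (Fin (m + 1)) (ZMod 2))ᵀ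
      = X * Xᵀ + vecMulVec c c := by
  ext i i'
  simp only [Matrix.mul_apply, Matrix.transpose_apply, Matrix.add_apply, vecMulVec_apply,
    Matrix.of_apply]
  rw [Fin.sum_univ_castSucc]
  simp [Fin.snoc_castSucc, Fin.snoc_last]

lemma snoc_mulVec (v : Fin (m + 1) → ZMod 2) :
    (Matrix.of fun i => Fin.snoc (X i) (c i) : Matrix (Fin n) (Fin (m + 1)) (ZMod 2)) *ᵥ v
      = X *ᵥ (v ∘ Fin.castSucc) + v (Fin.last m) • c := by
  ext i
  simp only [Matrix.mulVec, dotProduct, Matrix.of_apply, Pi.add_apply, Pi.smul_apply,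
    smul_eq_mul, Function.comp]
  rw [Fin.sum_univ_castSucc]
  simp [Fin.snoc_castSucc, Fin.snoc_last, mul_comm]

lemma snoc_range :
    LinearMap.range (Matrix.of fun i => Fin.snoc (X i) (c i)
        : Matrix (Fin n) (Fin (m + 1)) (ZMod 2)).mulVecLin
      = LinearMap.range X.mulVecLin ⊔ span (ZMod 2) {c} := by
  apply le_antisymm
  · rintro _ ⟨v, rfl⟩
    rw [mulVecLin_apply, snoc_mulVec]
    exact add_mem_sup ⟨v ∘ Fin.castSucc, rfl⟩ (smul_mem _ _ (mem_span_singleton_self _))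
  · rw [sup_le_iff]
    constructor
    · rintro _ ⟨v, rfl⟩
      refine ⟨Fin.snoc v 0, ?_⟩
      rw [mulVecLin_apply, mulVecLin_apply, snoc_mulVec]
      have h1 : (Fin.snoc v (0 : ZMod 2)) ∘ Fin.castSucc = v := by
        funext j; simp [Fin.snoc_castSucc]
      have h2 : (Fin.snoc v (0 : ZMod 2) : Fin (m + 1) → ZMod 2) (Fin.last m) = 0 := by simp
      rw [h1, h2, zero_smul, add_zero]
    · rw [span_le, Set.singleton_subset_iff]
      refine ⟨(Fin.snoc (0 : Fin m → ZMod 2) (1 : ZMod 2) : Fin (m + 1) → ZMod 2), ?_⟩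
      rw [mulVecLin_apply, snoc_mulVec]
      have h1 : (Fin.snoc (0 : Fin m → ZMod 2) (1 : ZMod 2)) ∘ Fin.castSucc
          = (0 : Fin m → ZMod 2) := by
        funext j; simp [Fin.snoc_castSucc]
      have h2 : (Fin.snoc (0 : Fin m → ZMod 2) (1 : ZMod 2) : Fin (m + 1) → ZMod 2)
          (Fin.last m) = 1 := by simp
      rw [h1, h2, one_smul, mulVec_zero, zero_add]

lemma snoc_rank_mem (hc : c ∈ LinearMap.range X.mulVecLin) :
    (Matrix.of fun i => Fin.snoc (X i) (c i) : Matrix (Fin n) (Fin (m + 1)) (ZMod 2)).rank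
      = X.rank := by
  have h : LinearMap.range X.mulVecLin ⊔ span (ZMod 2) {c} = LinearMap.range X.mulVecLin := by
    rw [sup_eq_left, span_le, Set.singleton_subset_iff]; exact hc
  rw [Matrix.rank, Matrix.rank, snoc_range, h]

lemma snoc_rank_not_mem (hc : c ∉ LinearMap.range X.mulVecLin) :
    (Matrix.of fun i => Fin.snoc (X i) (c i) : Matrix (Fin n) (Fin (m + 1)) (ZMod 2)).rank
      = X.rank + 1 := by
  rw [Matrix.rank, Matrix.rank, snoc_range]
  exact _root_.finrank_sup_span_singleton hc
end

section
variable {n m : ℕ} (X : Matrix (Fin n) (Fin m) (ZMod 2)) (a : Fin n → ZMod 2)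

lemma odd_cast_one {m : ℕ} (hm : Odd m) : (m : ZMod 2) = 1 := by
  obtain ⟨t, rfl⟩ := hm
  push_cast
  rw [show (2 : ZMod 2) = 0 from rfl]
  ring

lemma ones_dot (v : Fin m → ZMod 2) : (fun _ => (1 : ZMod 2)) ⬝ᵥ v = ∑ j, v j := by
  simp [dotProduct]

lemma addcol_mul_transpose (hm : Odd m) (hr : ∀ i, ∑ j, X i j = 0) :
    (X + vecMulVec a fun _ => 1) * (X + vecMulVec a fun _ => 1)ᵀ
      = X * Xᵀ + vecMulVec a a := by
  ext i i'
  simp only [Matrix.mul_apply, Matrix.transpose_apply, Matrix.add_apply, vecMulVec_apply,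
    mul_one]
  have expand : ∀ j, (X i j + a i) * (X i' j + a i')
      = X i j * X i' j + (X i j * a i' + (a i * X i' j + a i * a i')) := fun j => by ring
  rw [Finset.sum_congr rfl fun j _ => expand j, Finset.sum_add_distrib, Finset.sum_add_distrib,
    Finset.sum_add_distrib, ← Finset.sum_mul, ← Finset.mul_sum, hr i, hr i', zero_mul, mul_zero,
    zero_add, zero_add, Finset.sum_const, Finset.card_univ, Fintype.card_fin, nsmul_eq_mul,
    odd_cast_one hm, one_mul]

lemma addcol_mulVec (v : Fin m → ZMod 2) :
    (X + vecMulVec a fun _ => 1) *ᵥ v = X *ᵥ v + (∑ j, v j) • a := by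
  rw [add_mulVec, vecMulVec_mulVec', ones_dot]

lemma addcol_rank (hm : Odd m) (hr : ∀ i, ∑ j, X i j = 0)
    (ha : a ∉ LinearMap.range X.mulVecLin) :
    (X + vecMulVec a fun _ => 1).rank = X.rank + 1 := by
  have hone : (∑ _j : Fin m, (1 : ZMod 2)) = 1 := by
    rw [Finset.sum_const, Finset.card_univ, Fintype.card_fin, nsmul_eq_mul, odd_cast_one hm,
      mul_one]
  have hX1 : X *ᵥ (fun _ => 1) = 0 := by
    ext i
    simp only [mulVec, dotProduct, mul_one, Pi.zero_apply]
    exact hr i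
  have hamem : a ∈ LinearMap.range (X + vecMulVec a fun _ => 1).mulVecLin := by
    refine ⟨fun _ => 1, ?_⟩
    rw [mulVecLin_apply, addcol_mulVec, hX1, hone, one_smul, zero_add]
  have hle1 : LinearMap.range (X + vecMulVec a fun _ => 1).mulVecLin
      ≤ LinearMap.range X.mulVecLin ⊔ span (ZMod 2) {a} := by
    rintro _ ⟨v, rfl⟩
    rw [mulVecLin_apply, addcol_mulVec]
    exact add_mem_sup ⟨v, rfl⟩ (smul_mem _ _ (mem_span_singleton_self _))
  have hle2 : LinearMap.range X.mulVecLin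
      ≤ LinearMap.range (X + vecMulVec a fun _ => 1).mulVecLin ⊔ span (ZMod 2) {a} := by
    rintro _ ⟨v, rfl⟩
    have h1 : X *ᵥ v = (X + vecMulVec a fun _ => 1) *ᵥ v + (∑ j, v j) • a := by
      rw [addcol_mulVec, add_assoc, vadd_self, add_zero]
    rw [mulVecLin_apply, h1]
    exact add_mem_sup ⟨v, rfl⟩ (smul_mem _ _ (mem_span_singleton_self _))
  have hsup : LinearMap.range (X + vecMulVec a fun _ => 1).mulVecLin ⊔ span (ZMod 2) {a}
      = LinearMap.range X.mulVecLin ⊔ span (ZMod 2) {a} := by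
    apply le_antisymm
    · rw [sup_le_iff]
      exact ⟨hle1, le_sup_right⟩
    · rw [sup_le_iff]
      exact ⟨hle2.trans (by rw [sup_le_iff]; exact ⟨le_sup_left, le_sup_right⟩), le_sup_right⟩
  have hself : LinearMap.range (X + vecMulVec a fun _ => 1).mulVecLin
      = LinearMap.range (X + vecMulVec a fun _ => 1).mulVecLin ⊔ span (ZMod 2) {a} := by
    rw [sup_eq_left.mpr]
    rw [span_le, Set.singleton_subset_iff]
    exact hamem
  rw [Matrix.rank, Matrix.rank, hself, hsup, _root_.finrank_sup_span_singleton ha]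
end

section

lemma madd_self {p q : ℕ} (M : Matrix (Fin p) (Fin q) (ZMod 2)) : M + M = 0 := by
  ext i j; exact CharTwo.add_self_eq_zero _

lemma zmod2_mul_self (x : ZMod 2) : x * x = x := by fin_cases x <;> rfl

lemma eq_zero_of_rank_zero {n m : ℕ} {A : Matrix (Fin n) (Fin m) (ZMod 2)} (h : A.rank = 0) :
    A = 0 := by
  rw [Matrix.rank, Submodule.finrank_eq_zero] at h
  have h0 : A.mulVecLin = 0 := LinearMap.range_eq_bot.mp h
  ext i j
  have h2 : A *ᵥ Pi.single j 1 = 0 := by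
    have := congrArg (fun f => f (Pi.single j 1)) h0
    simpa [mulVecLin_apply] using this
  have h3 := congrFun h2 i
  simpa [mulVec_single] using h3

lemma mem_range_coord_zero {n p : ℕ} {B : Matrix (Fin n) (Fin p) (ZMod 2)} {i : Fin n}
    (h : ∀ l, B i l = 0) {v : Fin n → ZMod 2} (hv : v ∈ LinearMap.range B.mulVecLin) :
    v i = 0 := by
  obtain ⟨x, rfl⟩ := hv
  rw [mulVecLin_apply]
  simp [mulVec, dotProduct, h]

lemma range_factor {n m : ℕ} {X : Matrix (Fin n) (Fin m) (ZMod 2)}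
    {B : Matrix (Fin n) (Fin n) (ZMod 2)} (hB : B = X * Xᵀ) (hrk : X.rank = B.rank) :
    LinearMap.range B.mulVecLin = LinearMap.range X.mulVecLin := by
  have hle : LinearMap.range B.mulVecLin ≤ LinearMap.range X.mulVecLin := by
    rw [hB, mulVecLin_mul]
    exact LinearMap.range_comp_le_range _ _
  refine Submodule.eq_of_le_of_finrank_le hle ?_
  rw [← Matrix.rank, ← Matrix.rank]
  exact hrk.le

lemma mainAux : ∀ k : ℕ,
    (∀ (n : ℕ) (A : Matrix (Fin n) (Fin n) (ZMod 2)), Aᵀ = A → A.rank = k →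
      (∃ i, A i i = 1) →
      ∃ X : Matrix (Fin n) (Fin k) (ZMod 2), X.rank = k ∧ A = X * Xᵀ) ∧
    (∀ (n : ℕ) (A : Matrix (Fin n) (Fin n) (ZMod 2)), Aᵀ = A → A.rank = k →
      (∀ i, A i i = 0) →
      Even k ∧ ∃ X : Matrix (Fin n) (Fin (k + 1)) (ZMod 2), X.rank = k ∧ A = X * Xᵀ) := by
  intro k
  induction k using Nat.strong_induction_on with
  | _ k IH =>
  have part1 : ∀ (n : ℕ) (A : Matrix (Fin n) (Fin n) (ZMod 2)), Aᵀ = A → A.rank = k →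
      (∃ i, A i i = 1) →
      ∃ X : Matrix (Fin n) (Fin k) (ZMod 2), X.rank = k ∧ A = X * Xᵀ := by
    intro n A hA hrank hex
    obtain ⟨i, hii⟩ := hex
    have hk0 : k ≠ 0 := by
      intro h
      rw [h] at hrank
      rw [eq_zero_of_rank_zero hrank] at hii
      exact one_ne_zero hii.symm
    obtain ⟨k', rfl⟩ : ∃ k', k = k' + 1 := ⟨k - 1, by omega⟩
    have hBrk := pivot1_rank hA hii
    have hkerB := pivot1_ker hA hii
    set B : Matrix (Fin n) (Fin n) (ZMod 2) :=
      A + vecMulVec (fun m => A m i) (fun m => A m i) with hB'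
    set a : Fin n → ZMod 2 := fun m => A m i with ha'
    have hBsym : Bᵀ = B := by
      rw [hB', transpose_add, hA, vecMulVec_transpose']
    have hBrank : B.rank = k' := by omega
    have hrowB : ∀ l, B i l = 0 := by
      intro l
      rw [hB']
      simp only [Matrix.add_apply, vecMulVec_apply]
      have h1 : A i l = A l i := by conv_lhs => rw [← hA]; rw [transpose_apply]
      show A i l + A i i * A l i = 0
      rw [h1, hii, one_mul]
      exact CharTwo.add_self_eq_zero _
    have hai : a i = 1 := hii
    have hAeq : A = B + vecMulVec a a := by
      rw [hB', add_assoc, madd_self, add_zero]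
    by_cases hd : ∃ i', B i' i' = 1
    · obtain ⟨X', hX'rank, hBX'⟩ := (IH k' (by omega)).1 n B hBsym hBrank hd
      have hrange : LinearMap.range B.mulVecLin = LinearMap.range X'.mulVecLin :=
        range_factor hBX' (by rw [hX'rank, hBrank])
      have hanot : a ∉ LinearMap.range X'.mulVecLin := by
        rw [← hrange]
        intro hmem
        have := mem_range_coord_zero hrowB hmem
        rw [hai] at this
        exact one_ne_zero this
      refine ⟨Matrix.of fun i' => Fin.snoc (X' i') (a i'), ?_, ?_⟩
      · rw [snoc_rank_not_mem X' a hanot, hX'rank]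
      · rw [snoc_mul_transpose, ← hBX', ← hAeq]
    · push_neg at hd
      have hdiagB : ∀ i', B i' i' = 0 := by
        intro i'
        by_contra hne
        exact hd i' (zmod2_eq_one hne)
      obtain ⟨hkev, X', hX'rank, hBX'⟩ := (IH k' (by omega)).2 n B hBsym hBrank hdiagB
      have hrange : LinearMap.range B.mulVecLin = LinearMap.range X'.mulVecLin :=
        range_factor hBX' (by rw [hX'rank, hBrank])
      have hanot : a ∉ LinearMap.range X'.mulVecLin := by
        rw [← hrange]
        intro hmem
        have := mem_range_coord_zero hrowB hmem
        rw [hai] at this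
        exact one_ne_zero this
      have hr : ∀ i', ∑ j, X' i' j = 0 := by
        intro i'
        have h1 : B i' i' = ∑ j, X' i' j * X' i' j := by
          rw [hBX', Matrix.mul_apply]
          rfl
        have h2 : (∑ j, X' i' j * X' i' j) = ∑ j, X' i' j :=
          Finset.sum_congr rfl fun j _ => zmod2_mul_self _
        rw [← h2, ← h1, hdiagB i']
      have hm : Odd (k' + 1) := Even.add_one hkev
      refine ⟨X' + vecMulVec a fun _ => 1, ?_, ?_⟩
      · rw [addcol_rank X' a hm hr hanot, hX'rank]
      · rw [addcol_mul_transpose X' a hm hr, ← hBX', ← hAeq]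
  refine ⟨part1, ?_⟩
  intro n A hA hrank hdiag
  have hkev : Even k := parity_even k A hA hdiag hrank
  refine ⟨hkev, ?_⟩
  by_cases h0 : A = 0
  · have hk : k = 0 := by rw [h0, Matrix.rank_zero] at hrank; omega
    refine ⟨0, ?_, ?_⟩
    · rw [Matrix.rank_zero, hk]
    · rw [h0, Matrix.transpose_zero, Matrix.mul_zero]
  · have hent : ∃ i j, A i j = 1 := by
      by_contra hc
      push_neg at hc
      apply h0
      ext i j
      by_contra hne
      exact hc i j (zmod2_eq_one hne)
    obtain ⟨i, j, hij⟩ := hent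
    have hrange := pivot1'_range hA hdiag hij
    set B1 : Matrix (Fin n) (Fin n) (ZMod 2) :=
      A + vecMulVec (fun m => A m i + A m j) (fun m => A m i + A m j) with hB1'
    set c : Fin n → ZMod 2 := fun m => A m i + A m j with hc'
    have hB1sym : B1ᵀ = B1 := by
      rw [hB1', transpose_add, hA, vecMulVec_transpose']
    have hB1rank : B1.rank = k := by
      rw [Matrix.rank, hrange, ← Matrix.rank]
      exact hrank
    have hB1ii : B1 i i = 1 := by
      rw [hB1']
      simp only [Matrix.add_apply, vecMulVec_apply]
      have hci : (fun m => A m i + A m j) i = 1 := by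
        simp only
        have h1 : A i j = 1 := hij
        have h2 : A i i = 0 := hdiag i
        rw [h2, h1, zero_add]
      rw [show ((fun m => A m i + A m j) i) * ((fun m => A m i + A m j) i) = 1 from by
        rw [hci]; ring, hdiag i, zero_add]
    obtain ⟨X', hX'rank, hBX'⟩ := part1 n B1 hB1sym hB1rank ⟨i, hB1ii⟩
    have hcA : c ∈ LinearMap.range A.mulVecLin := by
      refine ⟨Pi.single i 1 + Pi.single j 1, ?_⟩
      rw [mulVecLin_apply, mulVec_add, col_eq, col_eq]
      ext m
      simp [hc']
    have hrangeX' : LinearMap.range B1.mulVecLin = LinearMap.range X'.mulVecLin :=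
      range_factor hBX' (by rw [hX'rank, hB1rank])
    have hcX' : c ∈ LinearMap.range X'.mulVecLin := by
      rw [← hrangeX', hrange]
      exact hcA
    have hAeq : A = B1 + vecMulVec c c := by
      rw [hB1', add_assoc, madd_self, add_zero]
    refine ⟨Matrix.of fun i' => Fin.snoc (X' i') (c i'), ?_, ?_⟩
    · rw [snoc_rank_mem X' c hcX', hX'rank]
    · rw [snoc_mul_transpose, ← hBX', ← hAeq]
end

theorem stmt7 (n k : ℕ) (A : Matrix (Fin n) (Fin n) (ZMod 2))
    (hsymm : A.IsSymm) (hrank : A.rank = k) :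
    (∃ X : Matrix (Fin n) (Fin k) (ZMod 2), X.rank = k ∧ A = X * Xᵀ) ∨
      (Even k ∧ ∃ X : Matrix (Fin n) (Fin (k + 1)) (ZMod 2), X.rank = k ∧ A = X * Xᵀ) := by
  have hA : Aᵀ = A := hsymm
  by_cases h : ∃ i, A i i = 1
  · exact Or.inl ((mainAux k).1 n A hA hrank h)
  · push_neg at h
    have hdiag : ∀ i, A i i = 0 := fun i => by
      by_contra hne
      exact h i (zmod2_eq_one hne)
    obtain ⟨hev, X, hX⟩ := (mainAux k).2 n A hA hrank hdiag
    exact Or.inr ⟨hev, X, hX⟩
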